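/- Let A, B, P ∈ L(H) be bounded operators on a Hilbert space. If P = AX - XB for some bounded X (i.e. P lies in the range of the Rosenblum operator τ_{A,B}) with A = B = T₀, and P commutes with T₀, then P is quasi-nilpotent, i.e. its spectrum is {0}. -/

import Mathlib

section KS

variable {R : Type*} [Ring R] (t x p : R)

private def dd (t : R) (y : R) : R := t * y - y * t

private lemma dd_add (a b : R) : dd t (a + b) = dd t a + dd t b := by
  simp only [dd]; noncomm_ring

private lemma dd_zero : dd t (0 : R) = 0 := by simp [dd]

private lemma dd_mul (a b : R) : dd t (a * b) = dd t a * b + a * dd t b := by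
  simp only [dd]; noncomm_ring

private lemma iter_add (m : ℕ) (a b : R) :
    (dd t)^[m] (a + b) = (dd t)^[m] a + (dd t)^[m] b := by
  induction m generalizing a b with
  | zero => rfl
  | succ k ihk => rw [Function.iterate_succ_apply, Function.iterate_succ_apply,
      Function.iterate_succ_apply, dd_add]; exact ihk _ _

variable (hp : p = t * x - x * t) (hc : p * t = t * p)

include hc in
private lemma dd_p : dd t p = 0 := by simp [dd, hc.symm]

include hc in
private lemma dd_p_mul (b : R) : dd t (p * b) = p * dd t b := by
  rw [dd_mul, dd_p t p hc, zero_mul, zero_add]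

include hc in
private lemma iter_p_mul (m : ℕ) (b : R) : (dd t)^[m] (p * b) = p * (dd t)^[m] b := by
  induction m generalizing b with
  | zero => rfl
  | succ m ih => rw [Function.iterate_succ_apply, Function.iterate_succ_apply,
      dd_p_mul t p hc, ih]

include hp in
private lemma dd_x : dd t x = p := by simp [dd, hp]

include hp hc in
private lemma iter_x_mul (m : ℕ) (b : R) :
    (dd t)^[m + 1] (x * b) = x * (dd t)^[m + 1] b + (m + 1) • (p * (dd t)^[m] b) := by
  induction m generalizing b with
  | zero =>
    rw [Function.iterate_one, Function.iterate_zero, id_eq, dd_mul, dd_x t x p hp]; simp [add_comm]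
  | succ m ih =>
    rw [Function.iterate_succ_apply, dd_mul, dd_x t x p hp, iter_add, iter_p_mul t p hc,
      ih (dd t b), ← Function.iterate_succ_apply, ← Function.iterate_succ_apply,
      succ_nsmul (p * (dd t)^[m+1] b) (m+1)]
    abel

include hp hc in
private lemma iter_pow (n : ℕ) :
    (dd t)^[n] (x ^ n) = n.factorial • p ^ n ∧ (dd t)^[n + 1] (x ^ n) = 0 := by
  induction n with
  | zero => simp [dd]
  | succ n ih =>
    obtain ⟨h1, h2⟩ := ih
    have hx : x ^ (n + 1) = x * x ^ n := by rw [pow_succ']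
    have e2 : (dd t)^[n + 2] (x ^ n) = 0 := by
      rw [Function.iterate_succ_apply', h2, dd_zero]
    constructor
    · rw [hx, iter_x_mul t x p hp hc, h2, mul_zero, zero_add, h1]
      rw [mul_smul_comm, ← pow_succ', smul_smul, Nat.factorial_succ]
    · rw [hx, iter_x_mul t x p hp hc (n + 1), e2, mul_zero, h2, mul_zero, smul_zero, add_zero]

end KS

section KSnorm

variable {R : Type*} [NormedRing R]

private lemma dd_norm (t y : R) : ‖dd t y‖ ≤ 2 * ‖t‖ * ‖y‖ := by
  calc ‖t * y - y * t‖ ≤ ‖t * y‖ + ‖y * t‖ := norm_sub_le _ _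
    _ ≤ ‖t‖ * ‖y‖ + ‖y‖ * ‖t‖ := add_le_add (norm_mul_le _ _) (norm_mul_le _ _)
    _ = 2 * ‖t‖ * ‖y‖ := by ring

private lemma iter_norm (t : R) (n : ℕ) (y : R) :
    ‖(dd t)^[n] y‖ ≤ (2 * ‖t‖) ^ n * ‖y‖ := by
  induction n with
  | zero => simp
  | succ n ih =>
    rw [Function.iterate_succ_apply', pow_succ]
    calc ‖dd t ((dd t)^[n] y)‖ ≤ 2 * ‖t‖ * ‖(dd t)^[n] y‖ := dd_norm _ _
      _ ≤ 2 * ‖t‖ * ((2 * ‖t‖) ^ n * ‖y‖) := by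
          apply mul_le_mul_of_nonneg_left ih; positivity
      _ = (2 * ‖t‖) ^ n * (2 * ‖t‖) * ‖y‖ := by ring

end KSnorm

private lemma key_bound {R : Type*} [NormedRing R] [NormedAlgebra ℝ R] [NormOneClass R]
    (t x p : R)
    (hp : p = t * x - x * t) (hc : p * t = t * p) (n : ℕ) :
    (n.factorial : ℝ) * ‖p ^ n‖ ≤ (2 * ‖t‖ * ‖x‖) ^ n := by
  rcases n with _ | n
  · simp
  set n' := n + 1
  have h1 := (iter_pow t x p hp hc n').1
  have h2 : ‖(dd t)^[n'] (x ^ n')‖ = (n'.factorial : ℝ) * ‖p ^ n'‖ := by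
    rw [h1, ← Nat.cast_smul_eq_nsmul ℝ, norm_smul]
    simp
  calc (n'.factorial : ℝ) * ‖p ^ n'‖ = ‖(dd t)^[n'] (x ^ n')‖ := h2.symm
    _ ≤ (2 * ‖t‖) ^ n' * ‖x ^ n'‖ := iter_norm t n' _
    _ ≤ (2 * ‖t‖) ^ n' * ‖x‖ ^ n' := by
        apply mul_le_mul_of_nonneg_left (norm_pow_le' x n.succ_pos)
        positivity
    _ = (2 * ‖t‖ * ‖x‖) ^ n' := by rw [mul_pow, mul_pow, mul_pow]

open scoped ENNReal NNReal

/-- If `P = T₀X - XT₀` lies in the range of the Rosenblum operator `σ_{T₀}`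
and `P` commutes with `T₀`, then `P` is quasi-nilpotent: its spectrum is `{0}`. -/
theorem stmt_4 {H : Type*} [NormedAddCommGroup H] [InnerProductSpace ℂ H]
    [CompleteSpace H] [Nontrivial H]
    (T₀ X P : H →L[ℂ] H)
    (hP : P = T₀ ∘L X - X ∘L T₀)
    (hcomm : P ∘L T₀ = T₀ ∘L P) :
    spectrum ℂ P = {0} := by
  have hp' : P = T₀ * X - X * T₀ := hP
  have hc' : P * T₀ = T₀ * P := hcomm
  set C : ℝ := 2 * ‖T₀‖ * ‖X‖ with hC
  have hCnn : 0 ≤ C := by positivity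
  -- spectral radius is zero
  have hrad : spectralRadius ℂ P = 0 := by
    refine le_antisymm ?_ (by simp)
    refine ENNReal.le_of_forall_pos_le_add (fun ε hε _ => ?_)
    rw [zero_add]
    have htend : Filter.Tendsto (fun n : ℕ => (C / ε) ^ n / n.factorial)
        Filter.atTop (nhds 0) := FloorSemiring.tendsto_pow_div_factorial_atTop _
    obtain ⟨N, hN⟩ := Filter.eventually_atTop.mp (htend.eventually_lt_const one_pos)
    set m : ℕ := N + 1 with hm
    have hmN : (C / ε) ^ m / m.factorial < 1 := hN m (Nat.le_succ N)
    have epos : (0 : ℝ) < ε := hε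
    have hfac : (0 : ℝ) < m.factorial := by positivity
    have hlt : (C / ε) ^ m < (m.factorial : ℝ) := (div_lt_one hfac).mp hmN
    have h3 : C ^ m < (ε : ℝ) ^ m * m.factorial := by
      have hce : C ^ m = (C / ε) ^ m * (ε : ℝ) ^ m := by
        rw [div_pow, div_mul_cancel₀]
        positivity
      rw [hce, mul_comm ((ε:ℝ)^m) _]
      exact mul_lt_mul_of_pos_right hlt (pow_pos epos m)
    have hkey := key_bound T₀ X P hp' hc' m
    have h4 : ‖P ^ m‖ ≤ (ε : ℝ) ^ m := by
      have : (m.factorial : ℝ) * ‖P ^ m‖ < (m.factorial : ℝ) * (ε : ℝ) ^ m := by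
        calc (m.factorial : ℝ) * ‖P ^ m‖ ≤ C ^ m := hkey
          _ < (ε : ℝ) ^ m * m.factorial := h3
          _ = (m.factorial : ℝ) * (ε : ℝ) ^ m := mul_comm _ _
      exact le_of_lt ((mul_lt_mul_iff_right₀ hfac).mp this)
    have h5 : ‖P ^ m‖₊ ≤ ε ^ m := by
      rw [← NNReal.coe_le_coe]
      push_cast
      exact h4
    refine (spectrum.spectralRadius_le_pow_nnnorm_pow_one_div ℂ P N).trans ?_
    rw [nnnorm_one, ENNReal.coe_one, ENNReal.one_rpow, mul_one]
    calc (‖P ^ (N + 1)‖₊ : ℝ≥0∞) ^ (1 / (N + 1) : ℝ)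
        ≤ ((ε ^ m : ℝ≥0) : ℝ≥0∞) ^ (1 / (N + 1) : ℝ) :=
          ENNReal.rpow_le_rpow (ENNReal.coe_le_coe.mpr h5) (by positivity)
      _ = (ε : ℝ≥0∞) := by
          rw [ENNReal.coe_pow, ← ENNReal.rpow_natCast ((ε : ℝ≥0∞)) m, ← ENNReal.rpow_mul]
          rw [hm]
          push_cast
          rw [mul_one_div, div_self (by positivity), ENNReal.rpow_one]
  -- conclude spectrum = {0}
  have hsub : spectrum ℂ P ⊆ {0} := by
    intro z hz
    have hle : (‖z‖₊ : ℝ≥0∞) ≤ spectralRadius ℂ P := le_iSup₂ (α := ℝ≥0∞) z hz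
    rw [hrad, le_zero_iff] at hle
    have : ‖z‖₊ = 0 := by exact_mod_cast hle
    simpa using this
  haveI : Nontrivial (H →L[ℂ] H) := ⟨1, 0, fun h => by
    have := congrArg norm h
    rw [norm_one, norm_zero] at this
    norm_num at this⟩
  obtain ⟨w, hw⟩ := spectrum.nonempty P
  have hw0 : w = 0 := hsub hw
  apply Set.Subset.antisymm hsub
  intro z hz
  rw [Set.mem_singleton_iff] at hz
  rw [hz, ← hw0]
  exact hw
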